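/- Let ψ: ℝ → ℂ be a Schwartz function with ∫_ℝ ψ(x) dx = 0, and for λ ≥ 2 set ψ_λ(x) := λ ψ(λ x). Then there is a constant C = C(ψ) such that ‖ψ_λ‖²_{H^{-1/2}(ℝ)} ≤ C for all λ ≥ 2, where ‖f‖²_{H^{-1/2}} := ∫_ℝ (1+ξ²)^{-1/2} |f̂(ξ)|² dξ. -/

import Mathlib

open MeasureTheory
open scoped FourierTransform Real RealInnerProductSpace

/-- Fourier transform of the rescaled function. -/
lemma fourier_scale (ψ : SchwartzMap ℝ ℂ) {lam : ℝ} (hlam : 0 < lam) (ξ : ℝ) :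
    𝓕 (fun x => (lam : ℂ) * ψ (lam * x)) ξ = 𝓕 (⇑ψ) (ξ / lam) := by
  rw [Real.fourier_eq, Real.fourier_eq]
  simp only [RCLike.inner_apply, conj_trivial, mul_comm ξ, mul_comm (ξ / lam)]
  have key : ∀ x : ℝ, (𝐞 (-(x * ξ)) : Circle) • ((lam : ℂ) * ψ (lam * x))
      = lam • (fun y : ℝ => (𝐞 (-(y * (ξ / lam))) : Circle) • ψ y) (lam * x) := by
    intro x
    have harg : lam * x * (ξ / lam) = x * ξ := by
      field_simp
    simp only [harg, Circle.smul_def, Complex.real_smul, smul_eq_mul]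
    ring
  simp_rw [key]
  rw [integral_smul, MeasureTheory.Measure.integral_comp_mul_left
    (fun y : ℝ => (𝐞 (-(y * (ξ / lam))) : Circle) • (ψ y : ℂ)) lam]
  rw [abs_of_pos (inv_pos.mpr hlam), smul_smul, mul_inv_cancel₀ hlam.ne', one_smul]

theorem mean_zero_scaling_bound (ψ : SchwartzMap ℝ ℂ) (h : (∫ x : ℝ, ψ x) = 0) :
    ∃ C : ℝ, ∀ lam : ℝ, 2 ≤ lam →
      (∫ ξ : ℝ, (1 + ξ ^ 2) ^ (-(1/2) : ℝ) *
        ‖𝓕 (fun x => (lam : ℂ) * ψ (lam * x)) ξ‖ ^ 2) ≤ C := by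
  classical
  set g : SchwartzMap ℝ ℂ := SchwartzMap.fourierTransformCLM ℝ ψ with hg
  have hg_apply : ∀ ξ : ℝ, g ξ = 𝓕 (⇑ψ) ξ := fun ξ => by
    simp [hg, SchwartzMap.fourier_coe]
  have hg0 : g 0 = 0 := by
    rw [hg_apply, Real.fourier_eq]
    simpa using h
  -- bound on the derivative of g
  obtain ⟨K₀, hK₀⟩ := g.decay 0 1
  set K : ℝ := max K₀ 0 with hKdef
  have hK : 0 ≤ K := le_max_right _ _
  have hgK : ∀ η : ℝ, ‖g η‖ ≤ K * |η| := by
    intro η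
    have hb : ∀ x : ℝ, x ∈ (Set.univ : Set ℝ) → ‖fderiv ℝ g x‖ ≤ K := by
      intro x _
      have h1 : ‖fderiv ℝ (⇑g) x‖ = ‖iteratedFDeriv ℝ 1 (⇑g) x‖ := by
        rw [← norm_iteratedFDeriv_fderiv, norm_iteratedFDeriv_zero]
      have h2 := hK₀.2 x
      simp only [pow_zero, one_mul] at h2
      rw [h1]
      exact h2.trans (le_max_left _ _)
    have := Convex.norm_image_sub_le_of_norm_fderiv_le
      (fun x _ => g.differentiable.differentiableAt) hb convex_univ
      (Set.mem_univ (0 : ℝ)) (Set.mem_univ η)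
    simpa [hg0, Real.norm_eq_abs] using this
  -- decay bound on g
  obtain ⟨M₀, hM₀⟩ := g.decay 1 0
  set M : ℝ := max M₀ 0 with hMdef
  have hM : 0 ≤ M := le_max_right _ _
  have hgM : ∀ η : ℝ, |η| * ‖g η‖ ≤ M := by
    intro η
    have := hM₀.2 η
    simp only [pow_one, norm_iteratedFDeriv_zero, Real.norm_eq_abs] at this
    exact this.trans (le_max_left _ _)
  refine ⟨2 * (K ^ 2 + M ^ 2) * π, fun lam hlam => ?_⟩
  have hlam0 : (0 : ℝ) < lam := lt_of_lt_of_le two_pos hlam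
  -- rewrite the Fourier transform
  have hFT : ∀ ξ : ℝ, 𝓕 (fun x => (lam : ℂ) * ψ (lam * x)) ξ = g (ξ / lam) := by
    intro ξ
    rw [fourier_scale ψ hlam0 ξ, hg_apply]
  -- the dominating function
  set D : ℝ → ℝ := fun ξ => 2 * (K ^ 2 + M ^ 2) * (lam⁻¹ * (1 + (ξ / lam) ^ 2)⁻¹) with hD
  have hDint : Integrable D := by
    exact ((integrable_inv_one_add_sq.comp_div hlam0.ne').const_mul _).const_mul _
  have hDval : ∫ ξ : ℝ, D ξ = 2 * (K ^ 2 + M ^ 2) * π := by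
    simp only [hD]
    rw [integral_const_mul, integral_const_mul,
      MeasureTheory.Measure.integral_comp_div (fun y : ℝ => (1 + y ^ 2)⁻¹) lam,
      integral_univ_inv_one_add_sq, abs_of_pos hlam0, smul_eq_mul]
    field_simp
  -- pointwise bound
  have hpt : ∀ ξ : ℝ, (1 + ξ ^ 2) ^ (-(1/2) : ℝ) *
      ‖𝓕 (fun x => (lam : ℂ) * ψ (lam * x)) ξ‖ ^ 2 ≤ D ξ := by
    intro ξ
    rw [hFT ξ]
    have h1pos : (0 : ℝ) < 1 + ξ ^ 2 := by positivity
    have hsqrt : (1 + ξ ^ 2) ^ (-(1/2) : ℝ) = (Real.sqrt (1 + ξ ^ 2))⁻¹ := by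
      rw [Real.sqrt_eq_rpow, ← Real.rpow_neg h1pos.le]
    set s : ℝ := Real.sqrt (1 + ξ ^ 2) with hs
    have hs1 : 1 ≤ s := by
      rw [hs]
      nlinarith [Real.sq_sqrt h1pos.le, Real.sqrt_nonneg (1 + ξ ^ 2)]
    have hsξ : |ξ| ≤ s := by
      rw [hs]
      have : |ξ| = Real.sqrt (ξ ^ 2) := (Real.sqrt_sq_eq_abs ξ).symm
      rw [this]
      exact Real.sqrt_le_sqrt (by nlinarith)
    have hDξ : D ξ = 2 * (K ^ 2 + M ^ 2) * (lam / (lam ^ 2 + ξ ^ 2)) := by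
      simp only [hD]
      congr 1
      rw [div_pow]
      field_simp
    rw [hsqrt, hDξ]
    -- core inequality: ‖g (ξ/lam)‖² ≤ 2(K²+M²) * lam * s / (lam² + ξ²)
    have hcore : ‖g (ξ / lam)‖ ^ 2 * (lam ^ 2 + ξ ^ 2) ≤ 2 * (K ^ 2 + M ^ 2) * (lam * s) := by
      have hgnn : (0 : ℝ) ≤ ‖g (ξ / lam)‖ := norm_nonneg _
      rcases le_or_gt |ξ| lam with hcase | hcase
      · -- small frequency: use the Lipschitz bound
        have hb : ‖g (ξ / lam)‖ ≤ K * (|ξ| / lam) := by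
          have := hgK (ξ / lam)
          rwa [abs_div, abs_of_pos hlam0] at this
        have hb2 : ‖g (ξ / lam)‖ ^ 2 ≤ K ^ 2 * ξ ^ 2 / lam ^ 2 := by
          have := mul_le_mul hb hb hgnn (by positivity)
          calc ‖g (ξ / lam)‖ ^ 2 = ‖g (ξ / lam)‖ * ‖g (ξ / lam)‖ := by ring
            _ ≤ (K * (|ξ| / lam)) * (K * (|ξ| / lam)) := this
            _ = K ^ 2 * |ξ| ^ 2 / lam ^ 2 := by ring
            _ = K ^ 2 * ξ ^ 2 / lam ^ 2 := by rw [sq_abs]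
        have hξ2 : ξ ^ 2 ≤ lam ^ 2 := by
          rw [← sq_abs ξ]
          exact pow_le_pow_left₀ (abs_nonneg ξ) hcase 2
        have hξs : ξ ^ 2 ≤ lam * s := by
          calc ξ ^ 2 = |ξ| * |ξ| := by rw [← sq_abs ξ]; ring
            _ ≤ lam * s := mul_le_mul hcase hsξ (abs_nonneg ξ) hlam0.le
        calc ‖g (ξ / lam)‖ ^ 2 * (lam ^ 2 + ξ ^ 2)
            ≤ (K ^ 2 * ξ ^ 2 / lam ^ 2) * (2 * lam ^ 2) := by
              apply mul_le_mul hb2 (by linarith) (by positivity) (by positivity)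
          _ = 2 * K ^ 2 * ξ ^ 2 := by field_simp
          _ ≤ 2 * (K ^ 2 + M ^ 2) * (lam * s) := by
              gcongr <;>
                first
                  | exact le_add_of_nonneg_right (sq_nonneg M)
                  | exact hξs
                  | positivity
      · -- large frequency: use the decay bound
        have hξ0 : (0 : ℝ) < |ξ| := lt_trans hlam0 hcase
        have hb : ‖g (ξ / lam)‖ ≤ M * lam / |ξ| := by
          have hthis := hgM (ξ / lam)
          rw [abs_div, abs_of_pos hlam0] at hthis
          rw [le_div_iff₀ hξ0]
          calc ‖g (ξ / lam)‖ * |ξ| = (|ξ| / lam * ‖g (ξ / lam)‖) * lam := by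
                field_simp
            _ ≤ M * lam := mul_le_mul_of_nonneg_right hthis hlam0.le
        have hb2 : ‖g (ξ / lam)‖ ^ 2 ≤ M ^ 2 * lam ^ 2 / ξ ^ 2 := by
          have hrhs : (0:ℝ) ≤ M * lam / |ξ| := by positivity
          have := mul_le_mul hb hb hgnn hrhs
          calc ‖g (ξ / lam)‖ ^ 2 = ‖g (ξ / lam)‖ * ‖g (ξ / lam)‖ := by ring
            _ ≤ (M * lam / |ξ|) * (M * lam / |ξ|) := this
            _ = M ^ 2 * lam ^ 2 / |ξ| ^ 2 := by ring
            _ = M ^ 2 * lam ^ 2 / ξ ^ 2 := by rw [sq_abs]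
        have hlm2 : lam ^ 2 ≤ ξ ^ 2 := by
          rw [← sq_abs ξ]
          exact pow_le_pow_left₀ hlam0.le hcase.le 2
        have hξne : ξ ≠ 0 := abs_pos.mp hξ0
        have hξ2 : (0:ℝ) < ξ ^ 2 := by positivity
        have hlms : lam ≤ s := le_trans hcase.le hsξ
        calc ‖g (ξ / lam)‖ ^ 2 * (lam ^ 2 + ξ ^ 2)
            ≤ (M ^ 2 * lam ^ 2 / ξ ^ 2) * (2 * ξ ^ 2) := by
              apply mul_le_mul hb2 (by linarith) (by positivity) (by positivity)
          _ = 2 * M ^ 2 * lam ^ 2 := by field_simp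
          _ ≤ 2 * (K ^ 2 + M ^ 2) * (lam * s) := by
              have hlam2s : lam ^ 2 ≤ lam * s := by
                calc lam ^ 2 = lam * lam := sq lam
                  _ ≤ lam * s := mul_le_mul_of_nonneg_left hlms hlam0.le
              gcongr <;>
                first
                  | exact le_add_of_nonneg_left (sq_nonneg K)
                  | exact hlam2s
                  | positivity
    have hspos : (0 : ℝ) < s := lt_of_lt_of_le one_pos hs1
    have hden : (0 : ℝ) < lam ^ 2 + ξ ^ 2 := by positivity
    rw [inv_mul_eq_div, ← mul_div_assoc, div_le_div_iff₀ hspos hden]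
    calc ‖g (ξ / lam)‖ ^ 2 * (lam ^ 2 + ξ ^ 2) ≤ 2 * (K ^ 2 + M ^ 2) * (lam * s) := hcore
      _ = 2 * (K ^ 2 + M ^ 2) * lam * s := by ring
  calc (∫ ξ : ℝ, (1 + ξ ^ 2) ^ (-(1/2) : ℝ) *
        ‖𝓕 (fun x => (lam : ℂ) * ψ (lam * x)) ξ‖ ^ 2)
      ≤ ∫ ξ : ℝ, D ξ := by
        refine integral_mono_of_nonneg (Filter.Eventually.of_forall fun ξ => ?_) hDint
          (Filter.Eventually.of_forall hpt)
        positivity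
    _ = 2 * (K ^ 2 + M ^ 2) * π := hDval
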